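/- In a configuration with exactly one signal whose every cell of value 3 has at most one neighbor of value 3 that precedes it along a fixed Z-path, an update with the 'wrong' letter destroys the signal: let c be a configuration, P a Z-path, and suppose the unique signal of c is at P(i-1) with c(P(i)) = 3, where P(i) = P(i-1) + α·(1,0) (a horizontal step), and all other cells in N_v(P(i-1)) ∪ N_v of neighbors have value ≤ 1. Then F(c,V) contains no signal: every cell of F(c,V) has state ≤ 3. -/
import Mathlib


inductive Letter | H | V
deriving DecidableEq, BEq

/-- Horizontal neighborhood `N_h(x) = {x, x+(1,0), x-(1,0)}`. -/
def Nh (x : ℤ × ℤ) : Finset (ℤ × ℤ) := {x, x + (1, 0), x - (1, 0)}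

/-- Vertical neighborhood `N_v(x) = {x, x+(0,1), x-(0,1)}`. -/
def Nv (x : ℤ × ℤ) : Finset (ℤ × ℤ) := {x, x + (0, 1), x - (0, 1)}

/-- The horizontal update of the fungal automaton. -/
def upH (c : ℤ × ℤ → ℤ) (x : ℤ × ℤ) : ℤ :=
  c x - 2 * (if 4 ≤ c x then 1 else 0) + ∑ y ∈ Nh x, (if 4 ≤ c y then 1 else 0)

/-- The vertical update of the fungal automaton. -/
def upV (c : ℤ × ℤ → ℤ) (x : ℤ × ℤ) : ℤ :=
  c x - 2 * (if 4 ≤ c x then 1 else 0) + ∑ y ∈ Nv x, (if 4 ≤ c y then 1 else 0)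

lemma sumNv (c : ℤ × ℤ → ℤ) (x : ℤ × ℤ) :
    ∑ y ∈ Nv x, (if 4 ≤ c y then (1:ℤ) else 0) =
      (if 4 ≤ c x then (1:ℤ) else 0) + (if 4 ≤ c (x + (0,1)) then 1 else 0) +
        (if 4 ≤ c (x - (0,1)) then 1 else 0) := by
  have h1 : x ∉ ({x + (0,1), x - (0,1)} : Finset (ℤ × ℤ)) := by
    obtain ⟨a, b⟩ := x; simp [Prod.ext_iff]; omega
  have h2 : x + (0,1) ∉ ({x - (0,1)} : Finset (ℤ × ℤ)) := by
    obtain ⟨a, b⟩ := x; simp [Prod.ext_iff]; omega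
  show ∑ y ∈ insert x (insert (x + (0,1)) {x - (0,1)}), (if 4 ≤ c y then (1:ℤ) else 0) = _
  rw [Finset.sum_insert h1, Finset.sum_insert h2, Finset.sum_singleton, add_assoc]

/-- An update with the "wrong" letter destroys a lone signal on a horizontal step:
if the unique signal of `c` sits at `p` with `c (p + (α,0)) = 3` (the next path cell,
a horizontal step), both vertical neighbors of `p` have state `≤ 1`, and every other
cell having a vertical neighbor of state `≥ 4` has state `≤ 1`, then `F(c,V)` contains
no signal. -/
theorem stmt15 (c : ℤ × ℤ → ℤ) (hrange : ∀ x, 0 ≤ c x ∧ c x ≤ 5)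
    (p : ℤ × ℤ) (α : ℤ) (hα : α = 1 ∨ α = -1)
    (hsig : c p = 4) (huniq : ∀ x : ℤ × ℤ, 4 ≤ c x → x = p)
    (hnext : c (p + (α, 0)) = 3)
    (hvert : c (p + (0, 1)) ≤ 1 ∧ c (p - (0, 1)) ≤ 1)
    (hother : ∀ y : ℤ × ℤ, y ≠ p → (∃ z ∈ Nv y, 4 ≤ c z) → c y ≤ 1) :
    ∀ x : ℤ × ℤ, upV c x ≤ 3 := by
  intro x
  unfold upV
  rw [sumNv]
  have hle : ∀ z : ℤ × ℤ, z ≠ p → c z ≤ 3 := by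
    intro z hz
    by_contra h
    exact hz (huniq z (by omega))
  by_cases hx : x = p
  · subst hx
    have h1 := hvert.1; have h2 := hvert.2
    rw [hsig]
    split_ifs <;> omega
  by_cases hx1 : x + (0,1) = p
  · have hxlow : c x ≤ 1 := by
      refine hother x hx ⟨p, ?_, by omega⟩
      simp [Nv, hx1]
    have hne2 : x - (0,1) ≠ p := by
      rw [← hx1]; obtain ⟨a, b⟩ := x; simp [Prod.ext_iff]; omega
    have h2 := hle _ hne2
    rw [hx1, hsig]
    split_ifs <;> omega
  by_cases hx2 : x - (0,1) = p
  · have hxlow : c x ≤ 1 := by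
      refine hother x hx ⟨p, ?_, by omega⟩
      simp [Nv, hx2]
    have hne1 : x + (0,1) ≠ p := by
      rw [← hx2]; obtain ⟨a, b⟩ := x; simp [Prod.ext_iff]; omega
    have h1 := hle _ hne1
    rw [hx2, hsig]
    split_ifs <;> omega
  · have h0 := hle _ hx; have h1 := hle _ hx1; have h2 := hle _ hx2
    split_ifs <;> omega
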